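/- Let φ : ℝ → ℝ be nondecreasing, continuous, and bi-Lipschitz for distances larger than N with constants C₁, C₂ > 0, and define θ(x) = ∫_{x−N}^{x+N} (φ(t) − φ(x))/(t − x) dt (the integrand extends continuously to t = x). Then there exists a constant C > 0 such that for every x ∈ ℝ, | ∫_ℝ (φ(t) − φ(x)) / ((t − x)((t − x)² + 1)) dt − θ(x) | ≤ C. -/

import Mathlib

open MeasureTheory intervalIntegral Set Real

theorem stmt_11 (φ : ℝ → ℝ) (hmono : Monotone φ) (hcont : Continuous φ)
    (N C₁ C₂ : ℝ) (hN : 0 < N) (hC₁ : 0 < C₁) (hC₂ : 0 < C₂)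
    (hbl : ∀ x₁ x₂ : ℝ, N ≤ x₂ - x₁ →
      C₁ * (x₂ - x₁) ≤ φ x₂ - φ x₁ ∧ φ x₂ - φ x₁ ≤ C₂ * (x₂ - x₁))
    (θ : ℝ → ℝ) (hθ : ∀ x, θ x = ∫ t in (x - N)..(x + N), (φ t - φ x) / (t - x)) :
    ∃ C > (0:ℝ), ∀ x : ℝ,
      |(∫ t : ℝ, (φ t - φ x) / ((t - x) * ((t - x) ^ 2 + 1))) - θ x| ≤ C := by
  refine ⟨2 * C₂ * N ^ 3 + 2 * (C₂ * π) + 1, by positivity, fun x => ?_⟩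
  set f : ℝ → ℝ := fun t => (φ t - φ x) / ((t - x) * ((t - x) ^ 2 + 1)) with hf
  set g : ℝ → ℝ := fun t => (φ t - φ x) / (t - x) with hg
  have hfm : Measurable f :=
    (hcont.measurable.sub measurable_const).div
      ((measurable_id.sub measurable_const).mul
        (((measurable_id.sub measurable_const).pow_const 2).add measurable_const))
  have hgm : Measurable g :=
    (hcont.measurable.sub measurable_const).div (measurable_id.sub measurable_const)
  -- the weight function
  have hw : Integrable (fun t : ℝ => (1 + (t - x) ^ 2)⁻¹) := by
    exact integrable_inv_one_add_sq.comp_sub_right x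
  have hwint : ∫ t : ℝ, (1 + (t - x) ^ 2)⁻¹ = π := by
    rw [integral_sub_right_eq_self (fun t : ℝ => (1 + t ^ 2)⁻¹) x]
    exact integral_univ_inv_one_add_sq
  -- abs bound on φ near x
  have hφbd : ∀ t ∈ Icc (x - N) (x + N), |φ t - φ x| ≤ C₂ * N := by
    intro t ht
    obtain ⟨ht1, ht2⟩ := ht
    rcases le_total x t with h | h
    · have h1 := (hbl x (x + N) (by linarith)).2
      have h2 : φ t ≤ φ (x + N) := hmono ht2
      have h3 : φ x ≤ φ t := hmono h
      rw [abs_le]; constructor <;> nlinarith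
    · have h1 := (hbl (x - N) x (by linarith)).2
      have h2 : φ (x - N) ≤ φ t := hmono ht1
      have h3 : φ t ≤ φ x := hmono h
      rw [abs_le]; constructor <;> nlinarith
  -- global comparison |φ t - φ x| ≤ C₂ |t - x| for |t-x| ≥ N
  have hdbd : ∀ t : ℝ, N ≤ |t - x| → |φ t - φ x| ≤ C₂ * |t - x| := by
    intro t ht
    rcases le_total x t with h | h
    · have habs : |t - x| = t - x := abs_of_nonneg (by linarith)
      rw [habs] at ht ⊢
      have h1 := (hbl x t ht).2
      have h3 : φ x ≤ φ t := hmono h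
      rw [abs_le]; constructor <;> nlinarith
    · have habs : |t - x| = x - t := by rw [abs_sub_comm]; exact abs_of_nonneg (by linarith)
      rw [habs] at ht ⊢
      have h1 := (hbl t x ht).2
      have h3 : φ t ≤ φ x := hmono h
      rw [abs_le]; constructor <;> nlinarith
  -- tail pointwise bound
  have hfb : ∀ t : ℝ, N ≤ |t - x| → |f t| ≤ C₂ * (1 + (t - x) ^ 2)⁻¹ := by
    intro t ht
    have hs0 : (0:ℝ) < |t - x| := lt_of_lt_of_le hN ht
    have hsq : (0:ℝ) < (t - x) ^ 2 + 1 := by positivity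
    have h1 : |f t| ≤ C₂ * |t - x| / (|t - x| * ((t - x) ^ 2 + 1)) := by
      rw [hf]
      simp only
      rw [abs_div, abs_mul, abs_of_pos hsq]
      gcongr
      exact hdbd t ht
    calc |f t| ≤ C₂ * |t - x| / (|t - x| * ((t - x) ^ 2 + 1)) := h1
      _ = C₂ * (1 + (t - x) ^ 2)⁻¹ := by
          field_simp
          ring
  -- integrability on the tails
  have hIic : IntegrableOn f (Iic (x - N)) := by
    refine Integrable.mono' ((hw.const_mul C₂).integrableOn) hfm.aestronglyMeasurable.restrict ?_
    refine (ae_restrict_iff' measurableSet_Iic).2 (Filter.Eventually.of_forall fun t ht => ?_)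
    have : N ≤ |t - x| := le_trans (by simp only [mem_Iic] at ht; linarith) (neg_le_abs _)
    simpa [Real.norm_eq_abs] using hfb t this
  have hIoi : IntegrableOn f (Ioi (x + N)) := by
    refine Integrable.mono' ((hw.const_mul C₂).integrableOn) hfm.aestronglyMeasurable.restrict ?_
    refine (ae_restrict_iff' measurableSet_Ioi).2 (Filter.Eventually.of_forall fun t ht => ?_)
    have : N ≤ |t - x| := le_trans (by simp only [mem_Ioi] at ht; linarith) (le_abs_self _)
    simpa [Real.norm_eq_abs] using hfb t this
  -- tail integral bounds
  have htail : ∀ s : Set ℝ, MeasurableSet s → IntegrableOn f s →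
      (∀ t ∈ s, N ≤ |t - x|) → |∫ t in s, f t| ≤ C₂ * π := by
    intro s hsm hsi hsb
    have h1 : |∫ t in s, f t| ≤ ∫ t in s, C₂ * (1 + (t - x) ^ 2)⁻¹ := by
      rw [← Real.norm_eq_abs]
      refine norm_integral_le_of_norm_le ((hw.const_mul C₂).integrableOn) ?_
      refine (ae_restrict_iff' hsm).2 (Filter.Eventually.of_forall fun t ht => ?_)
      simpa [Real.norm_eq_abs] using hfb t (hsb t ht)
    have h2 : ∫ t in s, C₂ * (1 + (t - x) ^ 2)⁻¹ ≤ ∫ t : ℝ, C₂ * (1 + (t - x) ^ 2)⁻¹ := by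
      refine setIntegral_le_integral (hw.const_mul C₂) ?_
      refine Filter.Eventually.of_forall fun t => ?_
      positivity
    have h3 : ∫ t : ℝ, C₂ * (1 + (t - x) ^ 2)⁻¹ = C₂ * π := by
      rw [MeasureTheory.integral_const_mul, hwint]
    linarith
  have hIicB : |∫ t in Iic (x - N), f t| ≤ C₂ * π := by
    refine htail _ measurableSet_Iic hIic fun t ht => ?_
    exact le_trans (by simp only [mem_Iic] at ht; linarith) (neg_le_abs _)
  have hIoiB : |∫ t in Ioi (x + N), f t| ≤ C₂ * π := by
    refine htail _ measurableSet_Ioi hIoi fun t ht => ?_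
    exact le_trans (by simp only [mem_Ioi] at ht; linarith) (le_abs_self _)
  -- pointwise relation f = g / (s^2+1)
  have hfg : ∀ t : ℝ, f t = g t / ((t - x) ^ 2 + 1) := by
    intro t
    rw [hf, hg]
    simp only
    rw [div_div]
  by_cases hint : IntegrableOn g (Ioc (x - N) (x + N)) volume
  · -- Case A : integrable
    show |(∫ t : ℝ, f t) - θ x| ≤ _
    have hIoc_f : IntegrableOn f (Ioc (x - N) (x + N)) := by
      refine Integrable.mono' hint.norm hfm.aestronglyMeasurable.restrict ?_
      refine Filter.Eventually.of_forall fun t => ?_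
      rw [Real.norm_eq_abs, Real.norm_eq_abs, hfg t, abs_div, abs_of_pos (by positivity :
        (0:ℝ) < (t - x) ^ 2 + 1)]
      exact div_le_self (abs_nonneg _) (by nlinarith [sq_nonneg (t - x)])
    have hIoiN : IntegrableOn f (Ioi (x - N)) := by
      rw [← Ioc_union_Ioi_eq_Ioi (by linarith : x - N ≤ x + N)]
      exact hIoc_f.union hIoi
    have hInt : Integrable f := by
      have h := hIic.union hIoiN
      rwa [Iic_union_Ioi, integrableOn_univ] at h
    have hsplit1 : ∫ t : ℝ, f t = (∫ t in Iic (x - N), f t) + ∫ t in Ioi (x - N), f t :=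
      (integral_Iic_add_Ioi hIic hIoiN).symm
    have hsplit2 : ∫ t in Ioi (x - N), f t =
        (∫ t in Ioc (x - N) (x + N), f t) + ∫ t in Ioi (x + N), f t := by
      rw [← Ioc_union_Ioi_eq_Ioi (by linarith : x - N ≤ x + N)]
      exact setIntegral_union (Disjoint.mono_left Ioc_subset_Iic_self (Iic_disjoint_Ioi le_rfl))
        measurableSet_Ioi hIoc_f hIoi
    have hθx : θ x = ∫ t in Ioc (x - N) (x + N), g t := by
      rw [hθ x, integral_of_le (by linarith : x - N ≤ x + N)]
    -- bound the middle difference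
    have hmid : |∫ t in Ioc (x - N) (x + N), (f t - g t)| ≤ 2 * C₂ * N ^ 3 := by
      have hμ : volume (Ioc (x - N) (x + N)) < ⊤ := by
        rw [Real.volume_Ioc]
        exact ENNReal.ofReal_lt_top
      have hbd : ∀ t ∈ Ioc (x - N) (x + N), ‖f t - g t‖ ≤ C₂ * N * N := by
        intro t ht
        have htI : t ∈ Icc (x - N) (x + N) := Ioc_subset_Icc_self ht
        have hd := hφbd t htI
        have hfgt : f t - g t = -((φ t - φ x) * (t - x)) / ((t - x) ^ 2 + 1) := by
          by_cases hx : t = x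
          · simp [hf, hg, hx]
          · have hs : t - x ≠ 0 := sub_ne_zero.2 hx
            rw [hf, hg]
            simp only
            field_simp
            ring
        rw [Real.norm_eq_abs, hfgt, abs_div, abs_of_pos (by positivity :
          (0:ℝ) < (t - x) ^ 2 + 1), abs_neg, abs_mul]
        have hsb : |t - x| ≤ N := by
          rw [abs_le]
          constructor <;> [linarith [htI.1]; linarith [htI.2]]
        calc |φ t - φ x| * |t - x| / ((t - x) ^ 2 + 1) ≤ |φ t - φ x| * |t - x| :=
              div_le_self (by positivity) (by nlinarith [sq_nonneg (t - x)])
          _ ≤ C₂ * N * N := by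
              have := abs_nonneg (φ t - φ x)
              nlinarith
      have := norm_setIntegral_le_of_norm_le_const (μ := volume) hμ hbd
      rw [Real.norm_eq_abs] at this
      refine le_trans this ?_
      rw [measureReal_def, Real.volume_Ioc, ENNReal.toReal_ofReal (by linarith)]
      nlinarith
    have key : (∫ t : ℝ, f t) - θ x =
        (∫ t in Iic (x - N), f t) + (∫ t in Ioi (x + N), f t) +
          ∫ t in Ioc (x - N) (x + N), (f t - g t) := by
      rw [hsplit1, hsplit2, hθx, integral_sub hIoc_f hint]
      ring
    calc |(∫ t : ℝ, f t) - θ x| ≤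
        |∫ t in Iic (x - N), f t| + |∫ t in Ioi (x + N), f t| +
          |∫ t in Ioc (x - N) (x + N), (f t - g t)| := by
          rw [key]; exact (abs_add_le _ _).trans (by gcongr; exact abs_add_le _ _)
      _ ≤ C₂ * π + C₂ * π + 2 * C₂ * N ^ 3 := by gcongr
      _ ≤ 2 * C₂ * N ^ 3 + 2 * (C₂ * π) + 1 := by linarith
  · -- Case B : not integrable, both integrals are zero
    show |(∫ t : ℝ, f t) - θ x| ≤ _
    have hθ0 : θ x = 0 := by
      rw [hθ x]
      refine integral_undef fun h => hint ?_
      exact (intervalIntegrable_iff_integrableOn_Ioc_of_le (by linarith : x - N ≤ x + N)).1 h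
    have hf0 : (∫ t : ℝ, f t) = 0 := by
      refine integral_undef fun h => hint ?_
      have hgf : ∀ t : ℝ, g t = f t * ((t - x) ^ 2 + 1) := by
        intro t
        rw [hfg t, div_mul_cancel₀]
        positivity
      have : IntegrableOn (fun t => f t * ((t - x) ^ 2 + 1)) (Ioc (x - N) (x + N)) := by
        refine Integrable.mono' ((h.integrableOn.norm.const_mul (N ^ 2 + 1)))
          ((hfm.mul (((measurable_id.sub measurable_const).pow_const 2).add
            measurable_const)).aestronglyMeasurable.restrict) ?_
        refine (ae_restrict_iff' measurableSet_Ioc).2 (Filter.Eventually.of_forall fun t ht => ?_)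
        have hsb : (t - x) ^ 2 ≤ N ^ 2 := by
          have h1 := ht.1
          have h2 := ht.2
          nlinarith
        rw [Real.norm_eq_abs, abs_mul, abs_of_pos (by positivity : (0:ℝ) < (t - x) ^ 2 + 1)]
        rw [mul_comm (N ^ 2 + 1)]
        gcongr
        exact le_of_eq (Real.norm_eq_abs _).symm
      exact this.congr_fun (fun t _ => (hgf t).symm) measurableSet_Ioc
    rw [hθ0, hf0]
    simp only [sub_zero, abs_zero]
    positivity
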